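/- Let $H = \sum_{\alpha=1}^m h_\alpha$ be a sum of Hermitian operators on $(\mathbb{C}^2)^{\otimes n}$, each $h_\alpha$ acting nontrivially on exactly $k$ qubits, with $M := \sum_\alpha \|h_\alpha\|$. Then for any $\varepsilon > 0$, the number of eigenvalues of $H$ (with multiplicity) that are at most $E_0(H) + \varepsilon M$ is at least $2^{\lfloor \varepsilon n/(2k+\varepsilon) \rfloor}$, where $E_0(H)$ is the minimum eigenvalue of $H$. -/

import Mathlib

set_option maxHeartbeats 1000000

open Matrix

/-- `A` acts (possibly) nontrivially only on the qubits in `S`: entries vanish when the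
inputs disagree outside `S`, and otherwise depend only on the coordinates in `S`. -/
def LocalTo {n : ℕ} (A : Matrix (Fin n → Fin 2) (Fin n → Fin 2) ℂ)
    (S : Finset (Fin n)) : Prop :=
  (∀ x y, (∃ i ∉ S, x i ≠ y i) → A x y = 0) ∧
  (∀ x y x' y', (∀ i ∈ S, x i = x' i) → (∀ i ∈ S, y i = y' i) →
    (∀ i ∉ S, x i = y i) → (∀ i ∉ S, x' i = y' i) → A x y = A x' y')

open Finset

noncomputable section
set_option linter.unusedSectionVars false

variable {ι : Type*} [Fintype ι] [DecidableEq ι]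

/-- squared ℓ² "norm" via dot product -/
def n2 (x : ι → ℂ) : ℝ := (star x ⬝ᵥ x).re

lemma n2_eq_sum (x : ι → ℂ) : n2 x = ∑ i, ‖x i‖ ^ 2 := by
  simp [n2, dotProduct, Complex.ext_iff, ← Complex.normSq_eq_norm_sq, Complex.normSq,
    Complex.mul_re, Pi.star_apply, RCLike.star_def]

lemma n2_nonneg (x : ι → ℂ) : 0 ≤ n2 x := by
  rw [n2_eq_sum]; positivity

lemma n2_eq_norm_sq (x : ι → ℂ) : n2 x = ‖(WithLp.equiv 2 (ι → ℂ)).symm x‖ ^ 2 := by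
  rw [n2_eq_sum, EuclideanSpace.norm_eq]
  rw [Real.sq_sqrt (by positivity)]
  rfl

lemma n2_pos_of_ne (x : ι → ℂ) (hx : x ≠ 0) : 0 < n2 x := by
  rcases Function.ne_iff.1 hx with ⟨i, hi⟩
  rw [n2_eq_sum]
  have h1 : 0 < ‖x i‖ ^ 2 := by
    have := norm_pos_iff.2 hi
    positivity
  exact lt_of_lt_of_le h1 (Finset.single_le_sum (f := fun i => ‖x i‖ ^ 2)
    (fun j _ => by positivity) (mem_univ i))


lemma star_dot_self (v : ι → ℂ) : star v ⬝ᵥ v = ((n2 v : ℝ) : ℂ) := by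
  unfold dotProduct
  rw [n2_eq_sum]
  push_cast
  refine Finset.sum_congr rfl fun i _ => ?_
  rw [Pi.star_apply, RCLike.star_def, mul_comm, Complex.mul_conj']

lemma n2_sum_mulVec {γ : Type*} (s : Finset γ) (A : γ → Matrix ι ι ℂ) (x : ι → ℂ) :
    (∑ a ∈ s, A a) *ᵥ x = ∑ a ∈ s, A a *ᵥ x := by
  funext i
  rw [Finset.sum_apply]
  show ∑ j, (∑ a ∈ s, A a) i j * x j = ∑ a ∈ s, ∑ j, A a i j * x j
  rw [Finset.sum_comm]
  refine Finset.sum_congr rfl fun j _ => ?_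
  rw [Matrix.sum_apply, Finset.sum_mul]

lemma dot_sum {γ : Type*} (s : Finset γ) (v : ι → ℂ) (w : γ → ι → ℂ) :
    v ⬝ᵥ (∑ a ∈ s, w a) = ∑ a ∈ s, v ⬝ᵥ w a := by
  unfold dotProduct
  rw [Finset.sum_comm]
  refine Finset.sum_congr rfl fun i _ => ?_
  rw [Finset.sum_apply, Finset.mul_sum]

lemma n2_zero : n2 (0 : ι → ℂ) = 0 := by simp [n2]

section eigen

variable {A : Matrix ι ι ℂ} (hA : A.IsHermitian)

/-- eigenvector as a plain function -/
def ev (v : ι) : ι → ℂ := (WithLp.equiv 2 (ι → ℂ)) (hA.eigenvectorBasis v)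

lemma ev_mulVec (v : ι) : A *ᵥ ev hA v = (hA.eigenvalues v : ℂ) • ev hA v := by
  have := hA.mulVec_eigenvectorBasis v
  exact this

lemma ev_ortho (v w : ι) : star (ev hA v) ⬝ᵥ ev hA w = if v = w then 1 else 0 := by
  have := hA.eigenvectorBasis.orthonormal
  rw [orthonormal_iff_ite] at this
  have h2 := this v w
  rw [EuclideanSpace.inner_eq_star_dotProduct, dotProduct_comm] at h2
  exact h2

lemma ev_dot_mulVec (v : ι) (x : ι → ℂ) :
    star (ev hA v) ⬝ᵥ (A *ᵥ x) = (hA.eigenvalues v : ℂ) * (star (ev hA v) ⬝ᵥ x) := by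
  rw [dotProduct_mulVec]
  have hs : star (ev hA v) ᵥ* A = star (A *ᵥ ev hA v) := by rw [star_mulVec, hA.eq]
  rw [hs, ev_mulVec hA v, star_smul, smul_dotProduct]
  simp [smul_eq_mul, Complex.star_def, Complex.conj_ofReal]

lemma basis_expand (x : ι → ℂ) (i : ι) :
    x i = ∑ v, (star (ev hA v) ⬝ᵥ x) * ev hA v i := by
  have h0 := hA.eigenvectorBasis.sum_repr' ((WithLp.equiv 2 (ι → ℂ)).symm x)
  have h1 := congrArg (WithLp.linearEquiv 2 ℂ (ι → ℂ)) h0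
  rw [map_sum] at h1
  simp only [_root_.map_smul, EuclideanSpace.inner_eq_star_dotProduct,
    Equiv.apply_symm_apply] at h1
  have h2 := congrFun h1 i
  simp only [WithLp.linearEquiv_apply, Equiv.apply_symm_apply, Finset.sum_apply,
    Pi.smul_apply, smul_eq_mul] at h2
  refine h2.symm.trans (Finset.sum_congr rfl fun v _ => ?_)
  rw [dotProduct_comm]
  rfl

lemma left_expand (x w : ι → ℂ) :
    star x ⬝ᵥ w = ∑ v, (starRingEnd ℂ) (star (ev hA v) ⬝ᵥ x) * (star (ev hA v) ⬝ᵥ w) := by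
  have key : ∀ i, star x i * w i = ∑ v,
      (starRingEnd ℂ) (star (ev hA v) ⬝ᵥ x) * (star (ev hA v) i * w i) := by
    intro i
    rw [Pi.star_apply, RCLike.star_def, basis_expand hA x i, map_sum, Finset.sum_mul]
    refine Finset.sum_congr rfl fun v _ => ?_
    simp only [_root_.map_mul, Pi.star_apply, RCLike.star_def]
    ring
  calc star x ⬝ᵥ w = ∑ i, star x i * w i := rfl
    _ = ∑ i, ∑ v, (starRingEnd ℂ) (star (ev hA v) ⬝ᵥ x) * (star (ev hA v) i * w i) :=
        Finset.sum_congr rfl fun i _ => key i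
    _ = ∑ v, ∑ i, (starRingEnd ℂ) (star (ev hA v) ⬝ᵥ x) * (star (ev hA v) i * w i) :=
        Finset.sum_comm
    _ = _ := by
        refine Finset.sum_congr rfl fun v _ => ?_
        rw [← Finset.mul_sum]
        rfl

lemma quad_expand (x : ι → ℂ) :
    (star x ⬝ᵥ A *ᵥ x).re = ∑ v, hA.eigenvalues v * ‖star (ev hA v) ⬝ᵥ x‖ ^ 2 := by
  rw [left_expand hA x (A *ᵥ x), Complex.re_sum]
  refine Finset.sum_congr rfl fun v _ => ?_
  rw [ev_dot_mulVec]
  set c := star (ev hA v) ⬝ᵥ x with hc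
  have : (starRingEnd ℂ) c * ((hA.eigenvalues v : ℂ) * c)
      = ((hA.eigenvalues v * ‖c‖ ^ 2 : ℝ) : ℂ) := by
    rw [mul_comm ((hA.eigenvalues v : ℂ)) c, ← mul_assoc, mul_comm ((starRingEnd ℂ) c) c,
      Complex.mul_conj']
    push_cast
    ring
  rw [this, Complex.ofReal_re]

lemma parseval (x : ι → ℂ) : n2 x = ∑ v, ‖star (ev hA v) ⬝ᵥ x‖ ^ 2 := by
  unfold n2
  rw [left_expand hA x x, Complex.re_sum]
  refine Finset.sum_congr rfl fun v _ => ?_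
  rw [mul_comm, Complex.mul_conj']
  norm_cast

lemma quad_lower (x : ι → ℂ) (t : ℝ) (ht : ∀ v, t ≤ hA.eigenvalues v) :
    t * n2 x ≤ (star x ⬝ᵥ A *ᵥ x).re := by
  rw [quad_expand hA, parseval hA, Finset.mul_sum]
  exact Finset.sum_le_sum fun v _ => mul_le_mul_of_nonneg_right (ht v) (by positivity)

lemma quad_upper_strict (x : ι → ℂ) (t : ℝ) (hx : x ≠ 0)
    (h0 : ∀ v, hA.eigenvalues v ≤ t → star (ev hA v) ⬝ᵥ x = 0) :
    t * n2 x < (star x ⬝ᵥ A *ᵥ x).re := by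
  rw [quad_expand hA, parseval hA, Finset.mul_sum]
  have hex : ∃ v, star (ev hA v) ⬝ᵥ x ≠ 0 := by
    by_contra hco
    push_neg at hco
    have : n2 x = 0 := by
      rw [parseval hA]
      refine Finset.sum_eq_zero fun v _ => by rw [hco v]; simp
    exact absurd this (ne_of_gt (n2_pos_of_ne x hx))
  obtain ⟨v0, hv0⟩ := hex
  have hl0 : t < hA.eigenvalues v0 := by
    by_contra hle
    exact hv0 (h0 v0 (le_of_not_gt hle))
  refine Finset.sum_lt_sum (fun v _ => ?_) ⟨v0, Finset.mem_univ v0, ?_⟩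
  · rcases le_or_gt (hA.eigenvalues v) t with hle | hgt
    · rw [h0 v hle]; simp
    · exact mul_le_mul_of_nonneg_right hgt.le (by positivity)
  · have hpos : 0 < ‖star (ev hA v0) ⬝ᵥ x‖ ^ 2 := by
      have := norm_pos_iff.2 hv0
      positivity
    exact (mul_lt_mul_of_pos_right hl0 hpos)

lemma quad_ev (v : ι) : (star (ev hA v) ⬝ᵥ A *ᵥ ev hA v).re = hA.eigenvalues v := by
  rw [ev_dot_mulVec, ev_ortho]
  simp

lemma n2_ev (v : ι) : n2 (ev hA v) = 1 := by
  unfold n2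
  rw [ev_ortho]
  simp

lemma quad_abs_le (B : Matrix ι ι ℂ) (x : ι → ℂ) :
    ‖star x ⬝ᵥ B *ᵥ x‖ ≤ ‖toEuclideanCLM (𝕜 := ℂ) B‖ * n2 x := by
  set x' := (WithLp.equiv 2 (ι → ℂ)).symm x with hx'
  have h1 : star x ⬝ᵥ (B *ᵥ x) = inner ℂ x' (toEuclideanCLM (𝕜 := ℂ) B x') := by
    rw [hx', EuclideanSpace.inner_eq_star_dotProduct]
    exact dotProduct_comm _ _
  rw [h1]
  calc ‖(inner ℂ x' (toEuclideanCLM (𝕜 := ℂ) B x') : ℂ)‖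
      ≤ ‖x'‖ * ‖toEuclideanCLM (𝕜 := ℂ) B x'‖ := norm_inner_le_norm _ _
    _ ≤ ‖x'‖ * (‖toEuclideanCLM (𝕜 := ℂ) B‖ * ‖x'‖) := by
        exact mul_le_mul_of_nonneg_left (ContinuousLinearMap.le_opNorm _ _) (norm_nonneg x')
    _ = ‖toEuclideanCLM (𝕜 := ℂ) B‖ * n2 x := by
        rw [n2_eq_norm_sq]
        ring

lemma quad_re_le (B : Matrix ι ι ℂ) (x : ι → ℂ) :
    (star x ⬝ᵥ B *ᵥ x).re ≤ ‖toEuclideanCLM (𝕜 := ℂ) B‖ * n2 x := by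
  have h1 : |(star x ⬝ᵥ B *ᵥ x).re| ≤ ‖star x ⬝ᵥ B *ᵥ x‖ := by
    exact Complex.abs_re_le_norm _
  have h2 := abs_le.1 (le_trans h1 (quad_abs_le B x))
  linarith [h2.2]

lemma quad_re_ge (B : Matrix ι ι ℂ) (x : ι → ℂ) :
    -(‖toEuclideanCLM (𝕜 := ℂ) B‖ * n2 x) ≤ (star x ⬝ᵥ B *ᵥ x).re := by
  have h1 : |(star x ⬝ᵥ B *ᵥ x).re| ≤ ‖star x ⬝ᵥ B *ᵥ x‖ := by
    exact Complex.abs_re_le_norm _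
  have h2 := abs_le.1 (le_trans h1 (quad_abs_le B x))
  linarith [h2.1]

lemma eig_count {κ : Type*} [Fintype κ] [DecidableEq κ]
    (t : ℝ) (Φ : (κ → ℂ) →ₗ[ℂ] (ι → ℂ)) (hinj : Function.Injective Φ)
    (hE : ∀ u, (star (Φ u) ⬝ᵥ A *ᵥ (Φ u)).re ≤ t * n2 (Φ u)) :
    Fintype.card κ ≤ (Finset.univ.filter fun v => hA.eigenvalues v ≤ t).card := by
  by_contra hlt
  push_neg at hlt
  set Low := (Finset.univ.filter fun v => hA.eigenvalues v ≤ t) with hLow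
  let L : (κ → ℂ) →ₗ[ℂ] (↥Low → ℂ) :=
    { toFun := fun u v => star (ev hA v.1) ⬝ᵥ Φ u
      map_add' := by intro u1 u2; funext v; simp [map_add, dotProduct_add]
      map_smul' := by intro c u; funext v; simp [_root_.map_smul, dotProduct_smul] }
  have hnotinj : ¬ Function.Injective L := by
    intro hLinj
    have hfr := LinearMap.finrank_le_finrank_of_injective hLinj
    rw [Module.finrank_fintype_fun_eq_card, Module.finrank_fintype_fun_eq_card,
      Fintype.card_coe] at hfr
    omega
  obtain ⟨u1, u2, hL, hne⟩ := Function.not_injective_iff.1 hnotinj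
  set u := u1 - u2 with hu
  have hu0 : u ≠ 0 := sub_ne_zero.2 hne
  have hLu : L u = 0 := by rw [hu, map_sub, hL, sub_self]
  have hx0 : Φ u ≠ 0 := fun hh => hu0 (hinj (by rw [hh, map_zero]))
  have hzero : ∀ v, hA.eigenvalues v ≤ t → star (ev hA v) ⬝ᵥ Φ u = 0 := by
    intro v hv
    exact congrFun hLu ⟨v, Finset.mem_filter.2 ⟨Finset.mem_univ v, hv⟩⟩
  exact absurd (hE u) (not_le.2 (quad_upper_strict hA (Φ u) t hx0 hzero))

end eigen

lemma choose_small {γ : Type*} [DecidableEq γ] (f : γ → ℝ) (hf : ∀ q, 0 ≤ f q) :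
    ∀ (d : ℕ) (s : Finset γ), d ≤ s.card →
      ∃ T, T ⊆ s ∧ T.card = d ∧ (s.card : ℝ) * ∑ q ∈ T, f q ≤ d * ∑ q ∈ s, f q := by
  intro d
  induction d with
  | zero =>
    intro s _
    refine ⟨∅, Finset.empty_subset s, rfl, by simp⟩
  | succ d IH =>
    intro s hd
    have hs : s.Nonempty := Finset.card_pos.1 (by omega)
    obtain ⟨q, hq, hmin⟩ := Finset.exists_min_image s f hs
    have hcount : d ≤ (s.erase q).card := by rw [Finset.card_erase_of_mem hq]; omega
    obtain ⟨T', hT's, hT'card, hT'⟩ := IH (s.erase q) hcount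
    have hqT' : q ∉ T' := fun hmem => (Finset.mem_erase.1 (hT's hmem)).1 rfl
    refine ⟨insert q T', Finset.insert_subset hq (hT's.trans (Finset.erase_subset q s)), by
      rw [Finset.card_insert_of_notMem hqT', hT'card], ?_⟩
    rw [Finset.sum_insert hqT']
    have herase : ∑ x ∈ s.erase q, f x = ∑ x ∈ s, f x - f q := by
      rw [Finset.sum_erase_eq_sub hq]
    rw [Finset.card_erase_of_mem hq, herase] at hT'
    have hcard1 : 1 ≤ s.card := Finset.card_pos.2 hs
    set c := s.card
    set Ss := ∑ x ∈ s, f x with hSs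
    set ST := ∑ x ∈ T', f x
    have hcm : (c : ℝ) * f q ≤ Ss := by
      have := Finset.card_nsmul_le_sum s f (f q) (fun x hx => hmin x hx)
      rwa [nsmul_eq_mul] at this
    have hsub : ST ≤ Ss - f q := by
      rw [← herase]
      exact Finset.sum_le_sum_of_subset_of_nonneg hT's (fun i _ _ => hf i)
    have hcast : ((c - 1 : ℕ) : ℝ) = (c : ℝ) - 1 := by
      push_cast [hcard1]
      ring
    rw [hcast] at hT'
    have hSnn : 0 ≤ Ss := Finset.sum_nonneg fun i _ => hf i
    have hfq : 0 ≤ f q := hf q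
    push_cast
    rcases lt_or_ge (1 : ℝ) (c : ℝ) with hc1 | hc1
    · have k1 : (c : ℝ) * (((c : ℝ) - 1) * ST) ≤ (c : ℝ) * ((d : ℝ) * (Ss - f q)) :=
        mul_le_mul_of_nonneg_left hT' (by positivity)
      have h1 : (0 : ℝ) ≤ (c : ℝ) - 1 - d := by
        have : (d : ℝ) + 1 ≤ (c : ℝ) := by exact_mod_cast hd
        linarith
      have k2 : ((c : ℝ) - 1 - d) * ((c : ℝ) * f q) ≤ ((c : ℝ) - 1 - d) * Ss :=
        mul_le_mul_of_nonneg_left hcm h1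
      nlinarith [k1, k2, hc1]
    · have hceq : (c : ℝ) = 1 := le_antisymm hc1 (by exact_mod_cast hcard1)
      have hd1 : (d : ℝ) + 1 ≤ (c : ℝ) := by exact_mod_cast hd
      have hd0 : (0 : ℝ) ≤ d := Nat.cast_nonneg d
      nlinarith [hsub, hSnn, hfq]
variable {N : ℕ} (T : Finset (Fin N))

def eqv : (Fin N → Fin 2) ≃ (({i : Fin N // i ∈ T} → Fin 2) × ({i : Fin N // ¬ i ∈ T} → Fin 2)) :=
  Equiv.piEquivPiSubtypeProd (fun i => i ∈ T) (fun _ => Fin 2)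

def glue (t : {i : Fin N // i ∈ T} → Fin 2) (b : {i : Fin N // ¬ i ∈ T} → Fin 2) :
    Fin N → Fin 2 := (eqv T).symm (t, b)

lemma eqv_fst (x : Fin N → Fin 2) (i : {i : Fin N // i ∈ T}) : (eqv T x).1 i = x i.1 := rfl
lemma eqv_snd (x : Fin N → Fin 2) (i : {i : Fin N // ¬ i ∈ T}) : (eqv T x).2 i = x i.1 := rfl

lemma glue_mem (t b) {i : Fin N} (hi : i ∈ T) : glue T t b i = t ⟨i, hi⟩ := by
  simp [glue, eqv, Equiv.piEquivPiSubtypeProd, hi]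

lemma glue_not_mem (t b) {i : Fin N} (hi : ¬ i ∈ T) : glue T t b i = b ⟨i, hi⟩ := by
  simp [glue, eqv, Equiv.piEquivPiSubtypeProd, hi]

lemma eqv_glue (t b) : eqv T (glue T t b) = (t, b) := (eqv T).apply_symm_apply _

/-- the matrix reduced to the qubits outside `T`. -/
def red (A : Matrix (Fin N → Fin 2) (Fin N → Fin 2) ℂ) :
    Matrix ({i : Fin N // ¬ i ∈ T} → Fin 2) ({i : Fin N // ¬ i ∈ T} → Fin 2) ℂ :=
  fun b b' => A (glue T (fun _ => 0) b) (glue T (fun _ => 0) b')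

lemma red_isHermitian {A : Matrix (Fin N → Fin 2) (Fin N → Fin 2) ℂ} (hA : A.IsHermitian) :
    (red T A).IsHermitian := by
  ext b b'
  rw [conjTranspose_apply, red, red]
  exact hA.apply _ _

lemma local_struct {A : Matrix (Fin N → Fin 2) (Fin N → Fin 2) ℂ} {S : Finset (Fin N)}
    (hA : LocalTo A S) (hST : ∀ i ∈ S, i ∉ T) (x y : Fin N → Fin 2) :
    A x y = if (eqv T x).1 = (eqv T y).1 then red T A (eqv T x).2 (eqv T y).2 else 0 := by
  by_cases hT : (eqv T x).1 = (eqv T y).1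
  · rw [if_pos hT]
    by_cases hoff : ∀ i, ¬ i ∈ T → ¬ i ∈ S → x i = y i
    · apply hA.2
      · intro i hiS
        rw [glue_not_mem T _ _ (hST i hiS)]
        rfl
      · intro i hiS
        rw [glue_not_mem T _ _ (hST i hiS)]
        rfl
      · intro i hiS
        by_cases hiT : i ∈ T
        · exact congrFun hT ⟨i, hiT⟩
        · exact hoff i hiT hiS
      · intro i hiS
        by_cases hiT : i ∈ T
        · rw [glue_mem T _ _ hiT, glue_mem T _ _ hiT]
        · rw [glue_not_mem T _ _ hiT, glue_not_mem T _ _ hiT]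
          exact hoff i hiT hiS
    · push_neg at hoff
      obtain ⟨i, hiT, hiS, hxy⟩ := hoff
      rw [hA.1 x y ⟨i, hiS, hxy⟩, red]
      rw [hA.1 _ _ ⟨i, hiS, by
        rw [glue_not_mem T _ _ hiT, glue_not_mem T _ _ hiT]
        exact fun hc => hxy (by rw [← eqv_snd T x ⟨i, hiT⟩, ← eqv_snd T y ⟨i, hiT⟩, hc])⟩]
  · rw [if_neg hT]
    apply hA.1
    obtain ⟨⟨i, hiT⟩, hneq⟩ := Function.ne_iff.1 hT
    exact ⟨i, fun hiS => (hST i hiS) hiT, hneq⟩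

/-- sum over configurations via glue -/
lemma sum_glue {β : Type*} [AddCommMonoid β] (f : (Fin N → Fin 2) → β) :
    ∑ x, f x = ∑ t, ∑ b, f (glue T t b) := by
  rw [← Equiv.sum_comp (eqv T).symm f, Fintype.sum_prod_type]
  rfl

/-- vslice of a vector -/
def vslice (t : {i : Fin N // i ∈ T} → Fin 2) (ψ : (Fin N → Fin 2) → ℂ) :
    ({i : Fin N // ¬ i ∈ T} → Fin 2) → ℂ := fun b => ψ (glue T t b)

lemma slice_dot (ψ φ : (Fin N → Fin 2) → ℂ) :
    star ψ ⬝ᵥ φ = ∑ t, star (vslice T t ψ) ⬝ᵥ vslice T t φ := by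
  rw [dotProduct, sum_glue]
  rfl

/-- predicate: `A` has block structure w.r.t. `T`. -/
def Struct (A : Matrix (Fin N → Fin 2) (Fin N → Fin 2) ℂ) : Prop :=
  ∀ x y, A x y = if (eqv T x).1 = (eqv T y).1 then red T A (eqv T x).2 (eqv T y).2 else 0

lemma struct_of_local {A : Matrix (Fin N → Fin 2) (Fin N → Fin 2) ℂ} {S : Finset (Fin N)}
    (hA : LocalTo A S) (hST : ∀ i ∈ S, i ∉ T) : Struct T A :=
  fun x y => local_struct T hA hST x y

lemma red_sum {γ : Type*} (s : Finset γ) (A : γ → Matrix (Fin N → Fin 2) (Fin N → Fin 2) ℂ) :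
    red T (∑ α ∈ s, A α) = ∑ α ∈ s, red T (A α) := by
  ext b b'
  simp [red, Matrix.sum_apply]

lemma struct_sum {γ : Type*} (s : Finset γ) (A : γ → Matrix (Fin N → Fin 2) (Fin N → Fin 2) ℂ)
    (hA : ∀ α ∈ s, Struct T (A α)) : Struct T (∑ α ∈ s, A α) := by
  intro x y
  rw [Matrix.sum_apply, red_sum, Matrix.sum_apply]
  rw [Finset.sum_congr rfl (fun α hα => hA α hα x y)]
  by_cases hc : (eqv T x).1 = (eqv T y).1
  · simp [hc]
  · simp [hc]

lemma vslice_quad {A : Matrix (Fin N → Fin 2) (Fin N → Fin 2) ℂ}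
    (hst : Struct T A) (ψ φ : (Fin N → Fin 2) → ℂ) :
    star ψ ⬝ᵥ (A *ᵥ φ) = ∑ t, star (vslice T t ψ) ⬝ᵥ (red T A *ᵥ vslice T t φ) := by
  rw [slice_dot T]
  refine Finset.sum_congr rfl fun t _ => ?_
  unfold dotProduct
  refine Finset.sum_congr rfl fun b _ => ?_
  congr 1
  show (A *ᵥ φ) (glue T t b) = (red T A *ᵥ vslice T t φ) b
  rw [mulVec, dotProduct, sum_glue T]
  rw [mulVec, dotProduct]
  rw [Finset.sum_comm]
  refine Finset.sum_congr rfl (fun b' _ => ?_)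
  · have hterm : ∀ t', A (glue T t b) (glue T t' b') * φ (glue T t' b')
        = if t = t' then red T A b b' * φ (glue T t' b') else 0 := by
      intro t'
      rw [hst, eqv_glue, eqv_glue]
      by_cases hteq : t = t'
      · rw [if_pos hteq, if_pos hteq, hteq]
      · rw [if_neg hteq, if_neg hteq, zero_mul]
    rw [Finset.sum_congr rfl (fun t' _ => hterm t'), Finset.sum_ite_eq]
    simp [vslice]

/-- the product-state embedding -/
def Phi (χ : ({i : Fin N // ¬ i ∈ T} → Fin 2) → ℂ) :
    (({i : Fin N // i ∈ T} → Fin 2) → ℂ) →ₗ[ℂ] ((Fin N → Fin 2) → ℂ) where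
  toFun := fun u x => u (eqv T x).1 * χ (eqv T x).2
  map_add' := fun u u' => funext fun x => by simp [add_mul]
  map_smul' := fun c u => funext fun x => by simp [mul_assoc]

lemma vslice_Phi (t : {i : Fin N // i ∈ T} → Fin 2) (u χ) :
    vslice T t (Phi T χ u) = u t • χ := by
  funext b
  show u (eqv T (glue T t b)).1 * χ (eqv T (glue T t b)).2 = u t • χ b
  rw [eqv_glue]
  rfl

lemma Phi_dot (u χ) : star (Phi T χ u) ⬝ᵥ Phi T χ u = (star u ⬝ᵥ u) * (star χ ⬝ᵥ χ) := by
  rw [slice_dot T]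
  rw [Finset.sum_congr rfl (fun t _ => by
    rw [vslice_Phi, star_smul, smul_dotProduct, dotProduct_smul])]
  show ∑ t, star (u t) • u t • (star χ ⬝ᵥ χ) = (∑ t, star u t * u t) * (star χ ⬝ᵥ χ)
  rw [Finset.sum_mul]
  refine Finset.sum_congr rfl fun t _ => ?_
  simp [smul_eq_mul, mul_assoc]

lemma Phi_quad {A : Matrix (Fin N → Fin 2) (Fin N → Fin 2) ℂ}
    (hst : Struct T A) (u χ) :
    star (Phi T χ u) ⬝ᵥ (A *ᵥ Phi T χ u) = (star u ⬝ᵥ u) * (star χ ⬝ᵥ (red T A *ᵥ χ)) := by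
  rw [vslice_quad T hst]
  rw [Finset.sum_congr rfl (fun t _ => by
    rw [vslice_Phi, star_smul, smul_dotProduct, mulVec_smul, dotProduct_smul])]
  show ∑ t, star (u t) • u t • (star χ ⬝ᵥ (red T A *ᵥ χ))
      = (∑ t, star u t * u t) * (star χ ⬝ᵥ (red T A *ᵥ χ))
  rw [Finset.sum_mul]
  refine Finset.sum_congr rfl fun t _ => ?_
  simp [smul_eq_mul, mul_assoc]

lemma Phi_n2 (u χ) : n2 (Phi T χ u) = n2 u * n2 χ := by
  unfold n2
  rw [Phi_dot T u χ, star_dot_self u, star_dot_self χ, ← Complex.ofReal_mul]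
  exact_mod_cast Complex.ofReal_re _

end

theorem stmt_13 (n m k : ℕ) (hn : 1 ≤ n) (hk : 1 ≤ k) (ε : ℝ) (hε : 0 < ε)
    (h : Fin m → Matrix (Fin n → Fin 2) (Fin n → Fin 2) ℂ)
    (hherm : ∀ α, (h α).IsHermitian)
    (hloc : ∀ α, ∃ S : Finset (Fin n), S.card = k ∧ LocalTo (h α) S)
    (M : ℝ) (hM : M = ∑ α, ‖Matrix.toEuclideanCLM (𝕜 := ℂ) (h α)‖) :
    ∀ hH : (∑ α, h α).IsHermitian,
      2 ^ (⌊ε * n / (2 * k + ε)⌋₊) ≤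
        (Finset.univ.filter fun v => hH.eigenvalues v ≤
          (⨅ w, hH.eigenvalues w) + ε * M).card := by
  intro hH
  classical
  choose S hScard hSloc using hloc
  have hM0 : 0 ≤ M := hM ▸ Finset.sum_nonneg fun α _ => norm_nonneg _
  set nrm : Fin m → ℝ := fun α => ‖Matrix.toEuclideanCLM (𝕜 := ℂ) (h α)‖ with hnrm
  have hnrm0 : ∀ α, 0 ≤ nrm α := fun α => norm_nonneg _
  set f : Fin n → ℝ := fun q => ∑ α, if q ∈ S α then nrm α else 0 with hfdef
  have hf0 : ∀ q, 0 ≤ f q := fun q =>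
    Finset.sum_nonneg fun α _ => by by_cases hc : q ∈ S α <;> simp [hc, hnrm0 α]
  have htot : ∑ q, f q = (k : ℝ) * M := by
    rw [hfdef]
    rw [Finset.sum_comm]
    have hα : ∀ α : Fin m, ∑ q, (if q ∈ S α then nrm α else 0) = (k : ℝ) * nrm α := by
      intro α
      rw [Finset.sum_ite_mem, Finset.univ_inter, Finset.sum_const, hScard α, nsmul_eq_mul]
    rw [Finset.sum_congr rfl (fun α _ => hα α), ← Finset.mul_sum, hM, hnrm]
  set d := ⌊ε * n / (2 * k + ε)⌋₊ with hd
  have hkpos : (0:ℝ) < 2 * k + ε := by positivity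
  have hdle : (d : ℝ) ≤ ε * n / (2 * k + ε) := Nat.floor_le (by positivity)
  have hdn : d ≤ n := by
    have h1 : ε * n / (2 * k + ε) ≤ (n : ℝ) := by
      rw [div_le_iff₀ hkpos]
      have hk0 : (0:ℝ) ≤ k := Nat.cast_nonneg k
      have hn0 : (0:ℝ) ≤ n := Nat.cast_nonneg n
      nlinarith
    calc d ≤ ⌊(n : ℝ)⌋₊ := Nat.floor_le_floor h1
      _ = n := Nat.floor_natCast n
  obtain ⟨T, hTsub, hTcard, hTsum⟩ := choose_small f hf0 d Finset.univ
    (by rw [Finset.card_univ, Fintype.card_fin]; exact hdn)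
  rw [Finset.card_univ, Fintype.card_fin, htot] at hTsum
  set P : Fin m → Prop := fun α => ∀ i ∈ S α, i ∉ T with hP
  set good := Finset.univ.filter P with hgood
  set bad := Finset.univ.filter (fun α => ¬ P α) with hbad
  set W := ∑ α ∈ bad, nrm α with hWdef
  have hW0 : 0 ≤ W := Finset.sum_nonneg fun α _ => hnrm0 α
  have hWle : W ≤ ∑ q ∈ T, f q := by
    have hTf : ∑ q ∈ T, f q = ∑ α, ((T ∩ S α).card : ℝ) * nrm α := by
      rw [hfdef]
      rw [Finset.sum_comm]
      refine Finset.sum_congr rfl fun α _ => ?_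
      rw [Finset.sum_ite_mem, Finset.sum_const, nsmul_eq_mul]
    rw [hTf, hWdef]
    have hstep : ∀ α ∈ bad, nrm α ≤ ((T ∩ S α).card : ℝ) * nrm α := by
      intro α hα
      have hnp : ¬ P α := (Finset.mem_filter.1 hα).2
      have hex2 : ∃ i ∈ S α, i ∈ T := by
        by_contra hco
        push_neg at hco
        exact hnp (by rw [hP]; exact fun i hi => hco i hi)
      obtain ⟨i, hiS, hiT⟩ := hex2
      have hne : (T ∩ S α).Nonempty := ⟨i, Finset.mem_inter.2 ⟨hiT, hiS⟩⟩
      have hc1 : (1 : ℝ) ≤ ((T ∩ S α).card : ℝ) := by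
        exact_mod_cast Finset.card_pos.2 hne
      nlinarith [hnrm0 α]
    calc ∑ α ∈ bad, nrm α ≤ ∑ α ∈ bad, ((T ∩ S α).card : ℝ) * nrm α :=
          Finset.sum_le_sum hstep
      _ ≤ ∑ α, ((T ∩ S α).card : ℝ) * nrm α := by
          refine Finset.sum_le_sum_of_subset_of_nonneg (Finset.subset_univ bad) ?_
          intro α _ _
          positivity
  have h2W : 2 * W ≤ ε * M := by
    have hnpos : (0:ℝ) < n := by exact_mod_cast hn
    have A2 : (n:ℝ) * W ≤ (d:ℝ) * ((k:ℝ) * M) :=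
      le_trans (mul_le_mul_of_nonneg_left hWle (le_of_lt hnpos)) hTsum
    have A3 : (d:ℝ) * (2 * k + ε) ≤ ε * n := (le_div_iff₀ hkpos).1 hdle
    have A4 : 2 * (d:ℝ) * (k:ℝ) ≤ ε * n := by
      nlinarith [mul_nonneg (Nat.cast_nonneg d : (0:ℝ) ≤ d) hε.le]
    have A5 : (n:ℝ) * (2 * W) ≤ (n:ℝ) * (ε * M) := by
      nlinarith [mul_le_mul_of_nonneg_right A4 hM0]
    exact le_of_mul_le_mul_left A5 hnpos
  -- the Hamiltonian split
  set Hg := ∑ α ∈ good, h α with hHg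
  set Hb := ∑ α ∈ bad, h α with hHb
  have hsplit : ∑ α, h α = Hg + Hb := by
    rw [hHg, hHb, hgood, hbad]
    exact (Finset.sum_filter_add_sum_filter_not Finset.univ P h).symm
  have hstg : Struct T Hg :=
    struct_sum T good h (fun α hα => struct_of_local T (hSloc α) ((Finset.mem_filter.1 hα).2))
  have hHgh : Hg.IsHermitian := by
    show Hgᴴ = Hg
    rw [hHg, Matrix.conjTranspose_sum]
    exact Finset.sum_congr rfl fun α _ => hherm α
  set HR := red T Hg with hHR
  have hHRh : HR.IsHermitian := red_isHermitian T hHgh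
  -- ground data
  obtain ⟨w0, hw0min⟩ := Finite.exists_min hH.eigenvalues
  have hE0 : ⨅ w, hH.eigenvalues w = hH.eigenvalues w0 :=
    le_antisymm (ciInf_le (Set.Finite.bddBelow (Set.finite_range _)) w0) (le_ciInf hw0min)
  set E0 := hH.eigenvalues w0 with hE0def
  obtain ⟨v0, hv0min⟩ := Finite.exists_min hHRh.eigenvalues
  set μ := hHRh.eigenvalues v0 with hμ
  set χ0 := ev hHRh v0 with hχ0
  have hχ0n : n2 χ0 = 1 := n2_ev hHRh v0
  have hχ0quad : (star χ0 ⬝ᵥ HR *ᵥ χ0).re = μ := quad_ev hHRh v0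
  set ψ0 := ev hH w0 with hψ0
  have hψ0n : n2 ψ0 = 1 := n2_ev hH w0
  have hψ0quad : (star ψ0 ⬝ᵥ (∑ α, h α) *ᵥ ψ0).re = E0 := quad_ev hH w0
  -- μ ≤ E0 + W
  have hQg : μ ≤ (star ψ0 ⬝ᵥ Hg *ᵥ ψ0).re := by
    rw [vslice_quad T hstg ψ0 ψ0, Complex.re_sum]
    have hns : ∑ t, n2 (vslice T t ψ0) = 1 := by
      rw [← hψ0n]
      unfold n2
      rw [slice_dot T ψ0 ψ0, Complex.re_sum]
    calc μ = ∑ t, μ * n2 (vslice T t ψ0) := by rw [← Finset.mul_sum, hns, mul_one]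
      _ ≤ ∑ t, (star (vslice T t ψ0) ⬝ᵥ (red T Hg) *ᵥ vslice T t ψ0).re :=
          Finset.sum_le_sum fun t _ => quad_lower hHRh _ μ hv0min
  have hQb : -W ≤ (star ψ0 ⬝ᵥ Hb *ᵥ ψ0).re := by
    have hex : star ψ0 ⬝ᵥ Hb *ᵥ ψ0 = ∑ α ∈ bad, star ψ0 ⬝ᵥ (h α) *ᵥ ψ0 := by
      rw [hHb, n2_sum_mulVec, dot_sum]
    rw [hex, Complex.re_sum, hWdef, ← Finset.sum_neg_distrib]
    refine Finset.sum_le_sum fun α _ => ?_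
    have := quad_re_ge (h α) ψ0
    rw [hψ0n, mul_one] at this
    exact this
  have hkey : μ ≤ E0 + W := by
    have hsum : (star ψ0 ⬝ᵥ Hg *ᵥ ψ0).re + (star ψ0 ⬝ᵥ Hb *ᵥ ψ0).re = E0 := by
      rw [← Complex.add_re, ← dotProduct_add, ← Matrix.add_mulVec, ← hsplit]
      exact hψ0quad
    linarith
  -- energy bound on the subspace
  have hEbound : ∀ u, (star ((Phi T χ0) u) ⬝ᵥ (∑ α, h α) *ᵥ ((Phi T χ0) u)).re ≤
      (E0 + ε * M) * n2 ((Phi T χ0) u) := by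
    intro u
    set x := (Phi T χ0) u with hx
    have hxn : n2 x = n2 u := by rw [hx, Phi_n2, hχ0n, mul_one]
    have hgoodq : (star x ⬝ᵥ Hg *ᵥ x).re = μ * n2 u := by
      rw [hx, Phi_quad T hstg u χ0, star_dot_self u, Complex.re_ofReal_mul, ← hHR, hχ0quad]
      ring
    have hbadq : (star x ⬝ᵥ Hb *ᵥ x).re ≤ W * n2 x := by
      have hex : star x ⬝ᵥ Hb *ᵥ x = ∑ α ∈ bad, star x ⬝ᵥ (h α) *ᵥ x := by
        rw [hHb, n2_sum_mulVec, dot_sum]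
      rw [hex, Complex.re_sum, hWdef, Finset.sum_mul]
      exact Finset.sum_le_sum fun α _ => quad_re_le (h α) x
    have htotq : (star x ⬝ᵥ (∑ α, h α) *ᵥ x).re =
        (star x ⬝ᵥ Hg *ᵥ x).re + (star x ⬝ᵥ Hb *ᵥ x).re := by
      rw [← Complex.add_re, ← dotProduct_add, ← Matrix.add_mulVec, ← hsplit]
    rw [htotq, hgoodq, hxn]
    have hn2u : 0 ≤ n2 u := n2_nonneg u
    nlinarith [mul_le_mul_of_nonneg_right hkey hn2u, hbadq, hxn, h2W,
      mul_le_mul_of_nonneg_right h2W hn2u]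
  -- injectivity
  have hχ0ne : χ0 ≠ 0 := by
    intro hc
    rw [hc, n2_zero] at hχ0n
    norm_num at hχ0n
  have hinj : Function.Injective (Phi T χ0) := by
    intro a b hab
    by_contra hne
    have hz : (Phi T χ0) (a - b) = 0 := by rw [map_sub, hab, sub_self]
    have hpos : (0:ℝ) < n2 (a - b) := n2_pos_of_ne _ (sub_ne_zero.2 hne)
    have : n2 ((Phi T χ0) (a - b)) = n2 (a - b) := by rw [Phi_n2, hχ0n, mul_one]
    rw [hz, n2_zero] at this
    linarith [hpos, this.symm.le]
  have hcount := eig_count hH (E0 + ε * M) (Phi T χ0) hinj hEbound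
  have hκ : Fintype.card ({i : Fin n // i ∈ T} → Fin 2) = 2 ^ d := by
    rw [Fintype.card_fun, Fintype.card_coe, hTcard, Fintype.card_fin]
  rw [hE0, ← hκ]
  exact hcount
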